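/- Let α be a nonempty finite type and let C be a convex set of probability vectors on α. Suppose q* ∈ C has q* i > 0 for every i and maximizes Shannon entropy over C, i.e., H(q) <= H(q*) for all q ∈ C. Then for every q ∈ C, the cross entropy satisfies -∑_i q i * log(q* i) <= H(q*). -/

import Mathlib

/-- Equalizer property of the maximum-entropy element: if `q*` is a full-support
probability vector in a convex set `C` of probability vectors maximizing Shannon
entropy over `C`, then the cross entropy of every `q ∈ C` relative to `q*`
is at most the entropy of `q*`. -/
theorem stmt_13 {α : Type*} [Fintype α] [Nonempty α] (C : Set (α → ℝ))
    (hC : Convex ℝ C)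
    (hprob : ∀ q ∈ C, (∀ i, 0 ≤ q i) ∧ ∑ i, q i = 1)
    (qstar : α → ℝ) (hmem : qstar ∈ C) (hpos : ∀ i, 0 < qstar i)
    (hmax : ∀ q ∈ C,
      (-∑ i, q i * Real.log (q i)) ≤ (-∑ i, qstar i * Real.log (qstar i))) :
    ∀ q ∈ C,
      (-∑ i, q i * Real.log (qstar i)) ≤ (-∑ i, qstar i * Real.log (qstar i)) := by
  intro q hq
  set d : α → ℝ := fun i => q i - qstar i with hd
  set g : ℝ → ℝ := fun t => ∑ i, (qstar i + t * d i) * Real.log (qstar i + t * d i)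
    with hg
  -- g has derivative D at 0
  have hD : HasDerivAt g (∑ i, (Real.log (qstar i) + 1) * d i) 0 := by
    apply HasDerivAt.fun_sum
    intro i _
    have h1 : HasDerivAt (fun t : ℝ => qstar i + t * d i) (d i) 0 := by
      simpa using ((hasDerivAt_id (0 : ℝ)).mul_const (d i)).const_add (qstar i)
    have h2 : HasDerivAt (fun x : ℝ => x * Real.log x)
        (Real.log (qstar i) + 1) (qstar i + 0 * d i) := by
      simpa using Real.hasDerivAt_mul_log (by simpa using (hpos i).ne')
    exact h2.comp 0 h1
  -- g t ≥ g 0 for t ∈ [0,1]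
  have hge : ∀ t ∈ Set.Ioc (0 : ℝ) 1, g 0 ≤ g t := by
    intro t ht
    have hmem' : (fun i => qstar i + t * d i) ∈ C := by
      have := hC hmem hq (by linarith [ht.2] : (0:ℝ) ≤ 1 - t) ht.1.le (by ring)
      convert this using 1
      funext i
      simp [hd]
      ring
    have := hmax _ hmem'
    simp only [hg]
    have h0 : g 0 = ∑ i, qstar i * Real.log (qstar i) := by simp [hg]
    linarith [this, h0.symm ▸ le_refl (g 0)]
  -- derivative nonneg: slope (g) 0 t = (g t - g 0)/t ≥ 0 for t > 0
  have hslope := hasDerivAt_iff_tendsto_slope.mp hD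
  have hDnn : 0 ≤ ∑ i, (Real.log (qstar i) + 1) * d i := by
    have h1 : Filter.Tendsto (slope g 0) (nhdsWithin 0 (Set.Ioi 0))
        (nhds (∑ i, (Real.log (qstar i) + 1) * d i)) :=
      hslope.mono_left (nhdsWithin_mono 0 (fun x hx => ne_of_gt hx))
    refine ge_of_tendsto h1 ?_
    filter_upwards [Ioc_mem_nhdsGT (by norm_num : (0:ℝ) < 1)] with t ht
    have := hge t ht
    rw [slope_def_field]
    have : 0 ≤ g t - g 0 := by linarith
    have ht0 : 0 < t := ht.1
    rw [sub_zero]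
    exact div_nonneg this ht0.le
  -- simplify derivative: ∑ d i = 0
  have hsumd : ∑ i, d i = 0 := by
    have h1 := (hprob q hq).2
    have h2 := (hprob qstar hmem).2
    simp [hd, Finset.sum_sub_distrib, h1, h2]
  have hkey : 0 ≤ ∑ i, Real.log (qstar i) * d i := by
    have : ∑ i, (Real.log (qstar i) + 1) * d i
        = (∑ i, Real.log (qstar i) * d i) + ∑ i, d i := by
      rw [← Finset.sum_add_distrib]; congr 1; funext i; ring
    rw [this, hsumd, add_zero] at hDnn
    exact hDnn
  have : ∑ i, qstar i * Real.log (qstar i) ≤ ∑ i, q i * Real.log (qstar i) := by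
    have hexp : ∑ i, Real.log (qstar i) * d i
        = (∑ i, q i * Real.log (qstar i)) - ∑ i, qstar i * Real.log (qstar i) := by
      rw [← Finset.sum_sub_distrib]; congr 1; funext i; simp [hd]; ring
    linarith [hexp ▸ hkey]
  linarith
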